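/- Let f satisfy: f ∈ C²([0,1);[0,∞)), f⁻¹(0) = {0}, lim_{s→1⁻}(1-s)f(s) = σ_c ∈ (0,∞), (d/ds)[(1-s)f(s)] > 0 on (0,1), and (d/ds)[(1-s)f'(s)/f(s)] < 0 on (0,1). Define f̄(s) := f'(s)/((1-s)f(s)³). Then f̄ is strictly decreasing on (0,1), i.e. f̄'(s) < 0 for all s ∈ (0,1). -/

import Mathlib

open Set Filter

/-- Under assumptions (f1)-(f4), the function `f̄(s) = f'(s)/((1-s)f(s)³)` is strictly
decreasing on `(0,1)`, with `f̄'(s) < 0` there. -/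
theorem stmt2 (f f' f'' : ℝ → ℝ) (σc : ℝ) (hσ : 0 < σc)
    (hf_nonneg : ∀ s ∈ Ico (0:ℝ) 1, 0 ≤ f s)
    (hf_zero : ∀ s ∈ Ico (0:ℝ) 1, (f s = 0 ↔ s = 0))
    (hc0 : ContinuousOn f (Ico 0 1))
    (hd1 : ∀ s ∈ Ioo (0:ℝ) 1, HasDerivAt f (f' s) s)
    (hd2 : ∀ s ∈ Ioo (0:ℝ) 1, HasDerivAt f' (f'' s) s)
    (hc2 : ContinuousOn f'' (Ioo 0 1))
    (hf3 : ∀ s ∈ Ioo (0:ℝ) 1, 0 < (1 - s) * f' s - f s)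
    (hf2 : Tendsto (fun s => (1 - s) * f s) (nhdsWithin 1 (Iio 1)) (nhds σc))
    (hf4 : ∀ s ∈ Ioo (0:ℝ) 1, deriv (fun t => (1 - t) * f' t / f t) s < 0) :
    (∀ s ∈ Ioo (0:ℝ) 1, deriv (fun t => f' t / ((1 - t) * (f t) ^ 3)) s < 0) ∧
      StrictAntiOn (fun t => f' t / ((1 - t) * (f t) ^ 3)) (Ioo 0 1) := by
  have key : ∀ s ∈ Ioo (0:ℝ) 1, ∃ D,
      HasDerivAt (fun t => f' t / ((1 - t) * (f t) ^ 3)) D s ∧ D < 0 := by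
    intro s hs
    obtain ⟨hs0, hs1⟩ := hs
    have hsIco : s ∈ Ico (0:ℝ) 1 := ⟨le_of_lt hs0, hs1⟩
    have hfs : 0 < f s := by
      rcases lt_or_eq_of_le (hf_nonneg s hsIco) with h | h
      · exact h
      · exact absurd (((hf_zero s hsIco).mp h.symm)) (ne_of_gt hs0)
    have hf := hd1 s ⟨hs0, hs1⟩
    have hf'' := hd2 s ⟨hs0, hs1⟩
    have hone : HasDerivAt (fun t : ℝ => 1 - t) (-1) s := by
      simpa using (hasDerivAt_id s).const_sub 1
    have hnum : HasDerivAt (fun t => (1 - t) * f' t)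
        ((-1) * f' s + (1 - s) * f'' s) s := hone.mul hf''
    have hg : HasDerivAt (fun t => (1 - t) * f' t / f t)
        ((((-1) * f' s + (1 - s) * f'' s) * f s - ((1 - s) * f' s) * f' s) / f s ^ 2) s :=
      hnum.div hf (ne_of_gt hfs)
    set G := ((((-1) * f' s + (1 - s) * f'' s) * f s - ((1 - s) * f' s) * f' s) / f s ^ 2)
      with hGdef
    have hGneg : G < 0 := by
      have := hf4 s ⟨hs0, hs1⟩
      rwa [hg.deriv] at this
    have hh : HasDerivAt (fun t => (1 - t) * f t) ((-1) * f s + (1 - s) * f' s) s :=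
      hone.mul hf
    have hh' : 0 < (-1) * f s + (1 - s) * f' s := by
      have := hf3 s ⟨hs0, hs1⟩; linarith
    have hhs : 0 < (1 - s) * f s := mul_pos (by linarith) hfs
    have hh2 : HasDerivAt (fun t => ((1 - t) * f t) ^ 2)
        (2 * ((1 - s) * f s) ^ 1 * ((-1) * f s + (1 - s) * f' s)) s := by
      simpa using hh.fun_pow 2
    have hgs : 0 < (1 - s) * f' s / f s := by
      have := hf3 s ⟨hs0, hs1⟩
      exact div_pos (by linarith) hfs
    have hq : HasDerivAt (fun t => ((1 - t) * f' t / f t) / ((1 - t) * f t) ^ 2)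
        ((G * ((1 - s) * f s) ^ 2 - ((1 - s) * f' s / f s) *
          (2 * ((1 - s) * f s) ^ 1 * ((-1) * f s + (1 - s) * f' s))) / (((1 - s) * f s) ^ 2) ^ 2)
        s := hg.div hh2 (pow_ne_zero 2 (ne_of_gt hhs))
    set D := ((G * ((1 - s) * f s) ^ 2 - ((1 - s) * f' s / f s) *
        (2 * ((1 - s) * f s) ^ 1 * ((-1) * f s + (1 - s) * f' s))) / (((1 - s) * f s) ^ 2) ^ 2)
    have hDneg : D < 0 := by
      apply div_neg_of_neg_of_pos
      · have h1 : G * ((1 - s) * f s) ^ 2 < 0 :=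
          mul_neg_of_neg_of_pos hGneg (pow_pos hhs 2)
        have h2 : 0 < ((1 - s) * f' s / f s) *
            (2 * ((1 - s) * f s) ^ 1 * ((-1) * f s + (1 - s) * f' s)) := by
          apply mul_pos hgs
          apply mul_pos _ hh'
          positivity
        linarith
      · positivity
    -- the two functions agree near s
    have heq : (fun t => f' t / ((1 - t) * (f t) ^ 3)) =ᶠ[nhds s]
        (fun t => ((1 - t) * f' t / f t) / ((1 - t) * f t) ^ 2) := by
      have hcont : ContinuousAt f s := hf.continuousAt
      have h1 : ∀ᶠ t in nhds s, 0 < f t :=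
        hcont.eventually (eventually_gt_nhds hfs)
      have h2 : ∀ᶠ t in nhds s, t < 1 := eventually_lt_nhds hs1
      filter_upwards [h1, h2] with t hft ht1
      have h1t : (1:ℝ) - t ≠ 0 := by linarith
      field_simp
    refine ⟨D, ?_, hDneg⟩
    exact hq.congr_of_eventuallyEq heq
  constructor
  · intro s hs
    obtain ⟨D, hD, hDneg⟩ := key s hs
    rwa [hD.deriv]
  · apply strictAntiOn_of_deriv_neg (convex_Ioo 0 1)
    · intro s hs
      obtain ⟨D, hD, _⟩ := key s hs
      exact hD.continuousAt.continuousWithinAt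
    · rw [interior_Ioo]
      intro s hs
      obtain ⟨D, hD, hDneg⟩ := key s hs
      rwa [hD.deriv]
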